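/- For every τ > 0 and x ∈ ℝ, v is twice differentiable in x at (τ,x) and ∂²_x v(τ,x) = e^x · N(x/√τ + √τ/2) + e^x · n(x/√τ + √τ/2)/√τ; equivalently, ∂²_x v(τ,x) = ∂_x v(τ,x) + 2 ∂_τ v(τ,x), i.e. the ratio relation ∂²_x v/∂_τ v = 2 + ∂_x v/∂_τ v holds. -/

import Mathlib

open MeasureTheory

/-- Standard normal cumulative distribution function. -/
noncomputable def stdN (y : ℝ) : ℝ :=
  ∫ u in Set.Iio y, Real.exp (-u ^ 2 / 2) / Real.sqrt (2 * Real.pi)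

/-- Standard normal density. -/
noncomputable def stdn (y : ℝ) : ℝ :=
  Real.exp (-y ^ 2 / 2) / Real.sqrt (2 * Real.pi)

/-- Unit-volatility Black–Scholes price in reduced variables. -/
noncomputable def bsv (τ x : ℝ) : ℝ :=
  Real.exp x * stdN (x / Real.sqrt τ + Real.sqrt τ / 2) -
    stdN (x / Real.sqrt τ - Real.sqrt τ / 2)

lemma stdn_continuous : Continuous stdn := by
  unfold stdn; fun_prop

lemma stdn_integrable : Integrable stdn := by
  have h : Integrable (fun u : ℝ => Real.exp (-(1/2 : ℝ) * u ^ 2)) :=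
    integrable_exp_neg_mul_sq (by norm_num)
  have := h.div_const (Real.sqrt (2 * Real.pi))
  convert this using 2 with u
  unfold stdn
  ring_nf

lemma hasDerivAt_stdN (y : ℝ) : HasDerivAt stdN (stdn y) y := by
  have heq : ∀ z : ℝ, stdN z = stdN 0 + ∫ u in (0:ℝ)..z, stdn u := by
    intro z
    have h1 : stdN z = ∫ u in Set.Iic z, stdn u := by
      unfold stdN stdn; rw [← MeasureTheory.integral_Iic_eq_integral_Iio]
    have h0 : stdN 0 = ∫ u in Set.Iic (0:ℝ), stdn u := by
      unfold stdN stdn; rw [← MeasureTheory.integral_Iic_eq_integral_Iio]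
    have := intervalIntegral.integral_Iic_sub_Iic (μ := volume)
      (stdn_integrable.integrableOn (s := Set.Iic (0:ℝ)))
      (stdn_integrable.integrableOn (s := Set.Iic z))
    rw [h1, h0]
    linarith [this]
  have hd : HasDerivAt (fun z => stdN 0 + ∫ u in (0:ℝ)..z, stdn u) (stdn y) y := by
    exact (intervalIntegral.integral_hasDerivAt_right
      stdn_integrable.intervalIntegrable
      stdn_continuous.aestronglyMeasurable.stronglyMeasurableAtFilter
      stdn_continuous.continuousAt).const_add (stdN 0)
  exact hd.congr_of_eventuallyEq (Filter.Eventually.of_forall fun z => heq z)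

lemma key_identity {s y : ℝ} (hs : 0 < s) :
    Real.exp y * stdn (y / Real.sqrt s + Real.sqrt s / 2)
      = stdn (y / Real.sqrt s - Real.sqrt s / 2) := by
  have h0 : Real.sqrt s ≠ 0 := by positivity
  unfold stdn
  rw [mul_div_assoc', ← Real.exp_add]
  congr 1
  have hh : (y / Real.sqrt s + Real.sqrt s / 2) ^ 2
      = (y / Real.sqrt s - Real.sqrt s / 2) ^ 2 + 2 * y := by
    field_simp
    ring_nf
  rw [hh]
  ring_nf

lemma bsv_hasDerivAt_x {s : ℝ} (hs : 0 < s) (y : ℝ) :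
    HasDerivAt (fun z => bsv s z) (Real.exp y * stdN (y / Real.sqrt s + Real.sqrt s / 2)) y := by
  have h0 : Real.sqrt s ≠ 0 := by positivity
  have hd1 : HasDerivAt (fun z : ℝ => z / Real.sqrt s + Real.sqrt s / 2) (1 / Real.sqrt s) y := by
    simpa using ((hasDerivAt_id y).div_const (Real.sqrt s)).add_const (Real.sqrt s / 2)
  have hd2 : HasDerivAt (fun z : ℝ => z / Real.sqrt s - Real.sqrt s / 2) (1 / Real.sqrt s) y := by
    simpa using ((hasDerivAt_id y).div_const (Real.sqrt s)).sub_const (Real.sqrt s / 2)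
  have hN1 := (hasDerivAt_stdN (y / Real.sqrt s + Real.sqrt s / 2)).comp y hd1
  have hN2 := (hasDerivAt_stdN (y / Real.sqrt s - Real.sqrt s / 2)).comp y hd2
  have H := ((Real.hasDerivAt_exp y).mul hN1).sub hN2
  simp only [Function.comp_apply, Function.comp] at H
  have heq : Real.exp y * stdN (y / Real.sqrt s + Real.sqrt s / 2) +
      Real.exp y * (stdn (y / Real.sqrt s + Real.sqrt s / 2) * (1 / Real.sqrt s)) -
      stdn (y / Real.sqrt s - Real.sqrt s / 2) * (1 / Real.sqrt s)
      = Real.exp y * stdN (y / Real.sqrt s + Real.sqrt s / 2) := by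
    rw [← key_identity hs]; ring
  rw [heq] at H
  exact H.congr_of_eventuallyEq (Filter.Eventually.of_forall fun z => rfl)

/-- Black–Scholes gamma in reduced variables:
`∂²_x v(τ,x) = e^x N(d₁) + e^x n(d₁)/√τ = ∂_x v(τ,x) + 2 ∂_τ v(τ,x)`. -/
theorem bsv_second_deriv_x (τ x : ℝ) (hτ : 0 < τ) :
    ∃ vτ vx : ℝ,
      HasDerivAt (fun t => bsv t x) vτ τ ∧
      HasDerivAt (fun y => bsv τ y) vx x ∧
      HasDerivAt (fun y => deriv (fun z => bsv τ z) y)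
        (Real.exp x * stdN (x / Real.sqrt τ + Real.sqrt τ / 2) +
          Real.exp x * stdn (x / Real.sqrt τ + Real.sqrt τ / 2) / Real.sqrt τ) x ∧
      Real.exp x * stdN (x / Real.sqrt τ + Real.sqrt τ / 2) +
          Real.exp x * stdn (x / Real.sqrt τ + Real.sqrt τ / 2) / Real.sqrt τ
        = vx + 2 * vτ := by
  have h0 : Real.sqrt τ ≠ 0 := by positivity
  have hsqrt : HasDerivAt Real.sqrt (1 / (2 * Real.sqrt τ)) τ := Real.hasDerivAt_sqrt hτ.ne'
  have hdiv : HasDerivAt (fun t : ℝ => x / Real.sqrt t)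
      ((0 * Real.sqrt τ - x * (1 / (2 * Real.sqrt τ))) / (Real.sqrt τ) ^ 2) τ :=
    (hasDerivAt_const τ x).div hsqrt h0
  have hD1 : HasDerivAt (fun t : ℝ => x / Real.sqrt t + Real.sqrt t / 2)
      ((0 * Real.sqrt τ - x * (1 / (2 * Real.sqrt τ))) / (Real.sqrt τ) ^ 2
        + 1 / (2 * Real.sqrt τ) / 2) τ := hdiv.add (hsqrt.div_const 2)
  have hD2 : HasDerivAt (fun t : ℝ => x / Real.sqrt t - Real.sqrt t / 2)
      ((0 * Real.sqrt τ - x * (1 / (2 * Real.sqrt τ))) / (Real.sqrt τ) ^ 2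
        - 1 / (2 * Real.sqrt τ) / 2) τ := hdiv.sub (hsqrt.div_const 2)
  have hN1 := (hasDerivAt_stdN (x / Real.sqrt τ + Real.sqrt τ / 2)).comp τ hD1
  have hN2 := (hasDerivAt_stdN (x / Real.sqrt τ - Real.sqrt τ / 2)).comp τ hD2
  have hτderiv : HasDerivAt (fun t => bsv t x)
      (Real.exp x * (stdn (x / Real.sqrt τ + Real.sqrt τ / 2) *
          ((0 * Real.sqrt τ - x * (1 / (2 * Real.sqrt τ))) / (Real.sqrt τ) ^ 2
            + 1 / (2 * Real.sqrt τ) / 2)) -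
        stdn (x / Real.sqrt τ - Real.sqrt τ / 2) *
          ((0 * Real.sqrt τ - x * (1 / (2 * Real.sqrt τ))) / (Real.sqrt τ) ^ 2
            - 1 / (2 * Real.sqrt τ) / 2)) τ := by
    have H := (hN1.const_mul (Real.exp x)).sub hN2
    simp only [Function.comp_apply, Function.comp] at H
    exact H.congr_of_eventuallyEq (Filter.Eventually.of_forall fun t => rfl)
  refine ⟨_, Real.exp x * stdN (x / Real.sqrt τ + Real.sqrt τ / 2), hτderiv,
    bsv_hasDerivAt_x hτ x, ?_, ?_⟩
  · have hfe : (fun y => deriv (fun z => bsv τ z) y)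
        = fun y => Real.exp y * stdN (y / Real.sqrt τ + Real.sqrt τ / 2) := by
      funext y; exact (bsv_hasDerivAt_x hτ y).deriv
    rw [hfe]
    have hdin : HasDerivAt (fun y : ℝ => y / Real.sqrt τ + Real.sqrt τ / 2) (1 / Real.sqrt τ) x := by
      simpa using ((hasDerivAt_id x).div_const (Real.sqrt τ)).add_const (Real.sqrt τ / 2)
    have hN := (hasDerivAt_stdN (x / Real.sqrt τ + Real.sqrt τ / 2)).comp x hdin
    have H := (Real.hasDerivAt_exp x).mul hN
    simp only [Function.comp_apply, Function.comp] at H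
    have heq : Real.exp x * stdN (x / Real.sqrt τ + Real.sqrt τ / 2) +
        Real.exp x * (stdn (x / Real.sqrt τ + Real.sqrt τ / 2) * (1 / Real.sqrt τ))
        = Real.exp x * stdN (x / Real.sqrt τ + Real.sqrt τ / 2) +
          Real.exp x * stdn (x / Real.sqrt τ + Real.sqrt τ / 2) / Real.sqrt τ := by
      ring
    rw [heq] at H
    exact H
  · rw [← key_identity (y := x) hτ]
    generalize stdn (x / Real.sqrt τ + Real.sqrt τ / 2) = n1
    generalize stdN (x / Real.sqrt τ + Real.sqrt τ / 2) = N1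
    field_simp
    ring
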